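/- Let u, v ∈ Iᵐ_{d,n} with v ≠ u and rank(F_{m,v}) ≤ rank(F_{m,u}). Then the leading variable x_u of F̄_{m,u} does not appear in F̄_{m,v}; that is, the degree of the polynomial F̄_{m,v} in the variable x_u is 0. -/
import Mathlib


open MvPolynomial

namespace Resolution

/-- `I_{d,n}`: the set of `d`-element subsets of `{1,…,n}` (modeled on `Fin n`),
indexing the Plücker variables `p_w`. -/
abbrev Idx (d n : ℕ) : Type := {w : Finset (Fin n) // w.card = d}

variable (𝕜 : Type) [Field 𝕜] (d : ℕ) {n : ℕ}

/-- The symbol `p_{w₁ ⋯ w_k a}` for the index list consisting of the elements of `S` in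
increasing order followed by `a`: it is `0` if the entries repeat (i.e. `a ∈ S`), and
otherwise it is `(-1)^{#{x ∈ S | a < x}} · p_{insert a S}`, the sign being that of the
permutation sorting the list. -/
noncomputable def pApp (S : Finset (Fin n)) (a : Fin n) : MvPolynomial (Idx d n) 𝕜 :=
  if h : a ∉ S ∧ (insert a S).card = d then
    ((-1 : 𝕜) ^ (S.filter fun x => a < x).card) • X ⟨insert a S, h.2⟩
  else 0

/-- The symbol `p_{a w₁ ⋯ w_k}` for the index list consisting of `a` followed by the
elements of `S` in increasing order:  it is `0` if the entries repeat, and otherwise it is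
`(-1)^{#{x ∈ S | x < a}} · p_{insert a S}`. -/
noncomputable def pPre (a : Fin n) (S : Finset (Fin n)) : MvPolynomial (Idx d n) 𝕜 :=
  if h : a ∉ S ∧ (insert a S).card = d then
    ((-1 : 𝕜) ^ (S.filter fun x => x < a).card) • X ⟨insert a S, h.2⟩
  else 0

/-- The `m`-primary Plücker relation
`F_{m,u} = p_m p_{uʳu₀} + ∑_{i=1}^d (-1)^i p_{uʳmᵢ} p_{u₀(m∖mᵢ)}`,
where `u₀ = min (u \ m)`, `uʳ = u.erase u₀` and `m₁ < ⋯ < m_d` lists `m`.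
(It is defined to be `0` unless `m.card = d`, `u.card = d` and `2 ≤ (u \ m).card`,
i.e. unless `u ∈ Iᵐ_{d,n}`.) -/
noncomputable def Fmu (m u : Finset (Fin n)) : MvPolynomial (Idx d n) 𝕜 :=
  if h : m.card = d ∧ u.card = d ∧ 2 ≤ (u \ m).card then
    let u0 : Fin n := (u \ m).min' (Finset.card_pos.mp (lt_of_lt_of_le two_pos h.2.2))
    X ⟨m, h.1⟩ * pApp 𝕜 d (u.erase u0) u0 +
      ∑ i : Fin d, ((-1 : 𝕜) ^ ((i : ℕ) + 1)) •
        (pApp 𝕜 d (u.erase u0) ((m.orderIsoOfFin h.1 i).1) *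
          pPre 𝕜 d u0 (m.erase ((m.orderIsoOfFin h.1 i).1)))
  else 0

/-- The rank of an `m`-primary Plücker relation: (number of nonzero terms) − 3. -/
noncomputable def rank {𝕜 : Type} [Field 𝕜] {d n : ℕ} (F : MvPolynomial (Idx d n) 𝕜) : ℕ :=
  F.support.card - 3

/-- The index set `I_{d,n} ∖ {m}` of the variables `x_w` of the dehomogenized
(with respect to the chart `p_m = 1`) polynomial ring `R̄₀`. -/
abbrev BIdx (d : ℕ) {n : ℕ} (m : Finset (Fin n)) : Type := {w : Idx d n // w.val ≠ m}

/-- Dehomogenization with respect to the chart `p_m = 1`: the `𝕜`-algebra map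
`R₀ = 𝕜[p_w : w ∈ I_{d,n}] → R̄₀ = 𝕜[x_w : w ∈ I_{d,n} ∖ {m}]`, `p_m ↦ 1`, `p_w ↦ x_w`. -/
noncomputable def dehom (m : Finset (Fin n)) :
    MvPolynomial (Idx d n) 𝕜 →ₐ[𝕜] MvPolynomial (BIdx d m) 𝕜 :=
  aeval fun w => if h : w.val = m then 1 else X ⟨w, h⟩


/- ############ auxiliary development ############ -/
section Aux

variable {𝕜} {d}

lemma smul_X_mul_smul_X {σ R : Type*} [CommRing R] (a b : σ) (c c1 c2 : R) :
    c • ((c1 • X a) * (c2 • X b)) =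
      monomial (Finsupp.single a 1 + Finsupp.single b 1) (c * c1 * c2) := by
  rw [smul_eq_C_mul, smul_eq_C_mul, smul_eq_C_mul, X, X,
    mul_mul_mul_comm, ← C_mul, monomial_mul, ← mul_assoc, ← C_mul, C_mul_monomial]
  ring_nf

lemma X_mul_smul_X {σ R : Type*} [CommRing R] (a b : σ) (c2 : R) :
    (X a) * (c2 • X b) = monomial (Finsupp.single a 1 + Finsupp.single b 1) c2 := by
  rw [smul_eq_C_mul, X, X, mul_left_comm, monomial_mul, C_mul_monomial]
  ring_nf

/-- `u₀ = min (u \ m)`. -/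
noncomputable def uz (m u : Finset (Fin n)) (hu2 : 2 ≤ (u \ m).card) : Fin n :=
  (u \ m).min' (Finset.card_pos.mp (by omega))

lemma uz_mem (m u : Finset (Fin n)) (hu2 : 2 ≤ (u \ m).card) : uz m u hu2 ∈ u \ m :=
  Finset.min'_mem _ _

lemma uz_mem_u (m u : Finset (Fin n)) (hu2 : 2 ≤ (u \ m).card) : uz m u hu2 ∈ u :=
  (Finset.mem_sdiff.mp (uz_mem m u hu2)).1

lemma uz_notMem_m (m u : Finset (Fin n)) (hu2 : 2 ≤ (u \ m).card) : uz m u hu2 ∉ m :=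
  (Finset.mem_sdiff.mp (uz_mem m u hu2)).2

lemma Fmu_eq (m u : Finset (Fin n)) (hm : m.card = d) (hu : u.card = d)
    (hu2 : 2 ≤ (u \ m).card) :
    Fmu 𝕜 d m u =
      X ⟨m, hm⟩ * pApp 𝕜 d (u.erase (uz m u hu2)) (uz m u hu2) +
      ∑ i : Fin d, ((-1 : 𝕜) ^ ((i : ℕ) + 1)) •
        (pApp 𝕜 d (u.erase (uz m u hu2)) ((m.orderIsoOfFin hm i).1) *
          pPre 𝕜 d (uz m u hu2) (m.erase ((m.orderIsoOfFin hm i).1))) := by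
  rw [Fmu, dif_pos ⟨hm, hu, hu2⟩]
  rfl

/-- The index `A_a = insert a (u.erase u₀)` for `a ∈ m \ u`. -/
noncomputable def Aidx (m u : Finset (Fin n)) (hu : u.card = d) (hu2 : 2 ≤ (u \ m).card)
    (a : {x // x ∈ m \ u}) : Idx d n :=
  ⟨insert a.1 (u.erase (uz m u hu2)), by
    have h1 : a.1 ∉ u := (Finset.mem_sdiff.mp a.2).2
    have h2 : a.1 ∉ u.erase (uz m u hu2) := fun h => h1 (Finset.mem_of_mem_erase h)
    have h3 : (u \ m).card ≤ u.card := Finset.card_le_card Finset.sdiff_subset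
    rw [Finset.card_insert_of_notMem h2, Finset.card_erase_of_mem (uz_mem_u m u hu2)]
    omega⟩

/-- The index `B_a = insert u₀ (m.erase a)` for `a ∈ m \ u`. -/
noncomputable def Bidx (hd : 1 ≤ d) (m u : Finset (Fin n)) (hm : m.card = d)
    (hu2 : 2 ≤ (u \ m).card) (a : {x // x ∈ m \ u}) : Idx d n :=
  ⟨insert (uz m u hu2) (m.erase a.1), by
    have h1 : a.1 ∈ m := (Finset.mem_sdiff.mp a.2).1
    have h2 : uz m u hu2 ∉ m.erase a.1 :=
      fun h => uz_notMem_m m u hu2 (Finset.mem_of_mem_erase h)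
    rw [Finset.card_insert_of_notMem h2, Finset.card_erase_of_mem h1, hm]
    omega⟩

noncomputable def muL (m u : Finset (Fin n)) (hm : m.card = d) (hu : u.card = d) :
    (Idx d n) →₀ ℕ :=
  Finsupp.single ⟨m, hm⟩ 1 + Finsupp.single ⟨u, hu⟩ 1

noncomputable def muA (hd : 1 ≤ d) (m u : Finset (Fin n)) (hm : m.card = d)
    (hu : u.card = d) (hu2 : 2 ≤ (u \ m).card) (a : {x // x ∈ m \ u}) : (Idx d n) →₀ ℕ :=
  Finsupp.single (Aidx m u hu hu2 a) 1 + Finsupp.single (Bidx hd m u hm hu2 a) 1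

variable (𝕜) in
lemma Fmu_decomp (hd : 1 ≤ d) (m u : Finset (Fin n)) (hm : m.card = d) (hu : u.card = d)
    (hu2 : 2 ≤ (u \ m).card) :
    ∃ (s0 : 𝕜) (c : {x // x ∈ m \ u} → 𝕜), s0 ≠ 0 ∧ (∀ a, c a ≠ 0) ∧
      Fmu 𝕜 d m u = monomial (muL m u hm hu) s0 +
        ∑ a ∈ (m \ u).attach, monomial (muA hd m u hm hu hu2 a) (c a) := by
  have hne : ∀ t : ℕ, ((-1 : 𝕜) ^ t) ≠ 0 := fun t => pow_ne_zero _ (by norm_num)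
  set u0 := uz m u hu2 with hu0def
  refine ⟨(-1 : 𝕜) ^ ((u.erase u0).filter fun x => u0 < x).card,
    fun a => (-1 : 𝕜) ^ ((((m.orderIsoOfFin hm).symm ⟨a.1, (Finset.mem_sdiff.mp a.2).1⟩ : Fin d) : ℕ) + 1)
      * (-1 : 𝕜) ^ ((u.erase u0).filter fun x => a.1 < x).card
      * (-1 : 𝕜) ^ ((m.erase a.1).filter fun x => x < u0).card,
    hne _, fun a => mul_ne_zero (mul_ne_zero (hne _) (hne _)) (hne _), ?_⟩
  rw [Fmu_eq m u hm hu hu2]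
  congr 1
  · -- leading term
    have hins : (insert u0 (u.erase u0)).card = d := by
      rw [Finset.insert_erase (uz_mem_u m u hu2)]; exact hu
    rw [pApp, dif_pos ⟨Finset.notMem_erase _ _, hins⟩]
    have hXeq : (X ⟨insert u0 (u.erase u0), hins⟩ : MvPolynomial (Idx d n) 𝕜) = X ⟨u, hu⟩ := by
      congr 1
      exact Subtype.ext (Finset.insert_erase (uz_mem_u m u hu2))
    rw [hXeq, X_mul_smul_X, muL]
  · -- the sum
    rw [← Finset.sum_filter_of_ne
      (p := fun i => ((m.orderIsoOfFin hm i).1 : Fin n) ∈ m \ u) (s := Finset.univ)]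
    · refine Finset.sum_bij'
        (i := fun i hi => (⟨(m.orderIsoOfFin hm i).1, by simpa using hi⟩ : {x // x ∈ m \ u}))
        (j := fun a _ => (m.orderIsoOfFin hm).symm ⟨a.1, (Finset.mem_sdiff.mp a.2).1⟩)
        ?_ ?_ ?_ ?_ ?_
      · intro i hi; exact Finset.mem_attach _ _
      · intro a ha
        simp only [Finset.mem_filter, Finset.mem_univ, true_and]
        rw [OrderIso.apply_symm_apply]
        exact a.2
      · intro i hi
        simp only [Subtype.coe_eta, OrderIso.symm_apply_apply]
      · intro a ha
        apply Subtype.ext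
        show ((m.orderIsoOfFin hm) ((m.orderIsoOfFin hm).symm ⟨a.1, _⟩)).1 = a.1
        rw [OrderIso.apply_symm_apply]
      · intro i hi
        simp only [Finset.mem_filter] at hi
        have hmiu : ((m.orderIsoOfFin hm i).1 : Fin n) ∉ u := by
          have := hi.2; rw [Finset.mem_sdiff] at this; exact this.2
        have hA1 : ((m.orderIsoOfFin hm i).1 : Fin n) ∉ u.erase u0 :=
          fun h => hmiu (Finset.mem_of_mem_erase h)
        have hA2 : (insert ((m.orderIsoOfFin hm i).1 : Fin n) (u.erase u0)).card = d := by
          have h3 : (u \ m).card ≤ u.card := Finset.card_le_card Finset.sdiff_subset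
          rw [Finset.card_insert_of_notMem hA1,
            Finset.card_erase_of_mem (uz_mem_u m u hu2)]
          omega
        have hB1 : u0 ∉ m.erase ((m.orderIsoOfFin hm i).1 : Fin n) :=
          fun h => uz_notMem_m m u hu2 (Finset.mem_of_mem_erase h)
        have hB2 : (insert u0 (m.erase ((m.orderIsoOfFin hm i).1 : Fin n))).card = d := by
          rw [Finset.card_insert_of_notMem hB1,
            Finset.card_erase_of_mem (m.orderIsoOfFin hm i).2, hm]
          omega
        rw [pApp, dif_pos ⟨hA1, hA2⟩, pPre, dif_pos ⟨hB1, hB2⟩, smul_X_mul_smul_X]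
        have hsymm : ((m.orderIsoOfFin hm).symm
            ⟨(m.orderIsoOfFin hm i).1, (m.orderIsoOfFin hm i).2⟩ : Fin d) = i := by
          have : (⟨(m.orderIsoOfFin hm i).1, (m.orderIsoOfFin hm i).2⟩ : {x // x ∈ m}) =
              m.orderIsoOfFin hm i := rfl
          rw [this, OrderIso.symm_apply_apply]
        simp only [muA, Aidx, Bidx]
        congr 1
        rw [hsymm]
    · intro i _ hne0
      by_contra hcon
      apply hne0
      have hmi : ((m.orderIsoOfFin hm i).1 : Fin n) ∈ m := (m.orderIsoOfFin hm i).2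
      have hmiu : ((m.orderIsoOfFin hm i).1 : Fin n) ∈ u := by
        by_contra h
        exact hcon (Finset.mem_sdiff.mpr ⟨hmi, h⟩)
      have : ((m.orderIsoOfFin hm i).1 : Fin n) ∈ u.erase u0 := by
        refine Finset.mem_erase.mpr ⟨?_, hmiu⟩
        intro h; exact uz_notMem_m m u hu2 (show u0 ∈ m from h ▸ hmi)
      rw [pApp, dif_neg (fun hcon2 => hcon2.1 this)]
      simp

variable {hd : 1 ≤ d} {m u : Finset (Fin n)} {hm : m.card = d} {hu : u.card = d}
  {hu2 : 2 ≤ (u \ m).card}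

lemma Bidx_val_ne_m (a : {x // x ∈ m \ u}) : (Bidx hd m u hm hu2 a).1 ≠ m := by
  intro h
  have h1 : uz m u hu2 ∈ (Bidx hd m u hm hu2 a).1 := Finset.mem_insert_self _ _
  rw [h] at h1
  exact uz_notMem_m m u hu2 h1

lemma Bidx_sdiff_subset (a : {x // x ∈ m \ u}) :
    (Bidx hd m u hm hu2 a).1 \ m ⊆ {uz m u hu2} := by
  intro x hx
  rw [Finset.mem_sdiff] at hx
  rcases Finset.mem_insert.mp hx.1 with h | h
  · simp [h]
  · exact absurd (Finset.mem_of_mem_erase h) hx.2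

lemma Bidx_val_ne_u (a : {x // x ∈ m \ u}) : (Bidx hd m u hm hu2 a).1 ≠ u := by
  intro h
  have h1 := Finset.card_le_card (Bidx_sdiff_subset (hd := hd) (hm := hm) (hu2 := hu2) a)
  rw [h, Finset.card_singleton] at h1
  omega

lemma Bidx_ne_Aidx (a b : {x // x ∈ m \ u}) :
    Bidx hd m u hm hu2 a ≠ Aidx m u hu hu2 b := by
  intro h
  have h1 : uz m u hu2 ∈ (Aidx m u hu hu2 b).1 := by
    rw [← h]
    exact Finset.mem_insert_self _ _
  rcases Finset.mem_insert.mp h1 with h2 | h2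
  · exact uz_notMem_m m u hu2 (h2 ▸ (Finset.mem_sdiff.mp b.2).1)
  · exact Finset.notMem_erase _ _ h2

lemma Bidx_inj (a b : {x // x ∈ m \ u})
    (h : Bidx hd m u hm hu2 a = Bidx hd m u hm hu2 b) : a = b := by
  have hval : insert (uz m u hu2) (m.erase a.1) = insert (uz m u hu2) (m.erase b.1) :=
    congrArg Subtype.val h
  have ham : a.1 ∈ m := (Finset.mem_sdiff.mp a.2).1
  have h1 : uz m u hu2 ∉ m.erase a.1 :=
    fun hh => uz_notMem_m m u hu2 (Finset.mem_of_mem_erase hh)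
  have h2 : uz m u hu2 ∉ m.erase b.1 :=
    fun hh => uz_notMem_m m u hu2 (Finset.mem_of_mem_erase hh)
  have : m.erase a.1 = m.erase b.1 := by
    rw [← Finset.erase_insert h1, ← Finset.erase_insert h2, hval]
  exact Subtype.ext ((Finset.erase_inj m ham).mp this)

lemma muA_ne_muL (a : {x // x ∈ m \ u}) : muA hd m u hm hu hu2 a ≠ muL m u hm hu := by
  intro h
  have h1 : (⟨m, hm⟩ : Idx d n) ≠ Bidx hd m u hm hu2 a :=
    fun he => Bidx_val_ne_m a (congrArg Subtype.val he).symm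
  have h2 : (⟨u, hu⟩ : Idx d n) ≠ Bidx hd m u hm hu2 a :=
    fun he => Bidx_val_ne_u a (congrArg Subtype.val he).symm
  have h3 := DFunLike.congr_fun h (Bidx hd m u hm hu2 a)
  simp only [muA, muL, Finsupp.add_apply, Finsupp.single_apply, if_pos rfl, if_neg h1,
    if_neg h2] at h3
  split_ifs at h3

lemma muA_inj (a b : {x // x ∈ m \ u})
    (h : muA hd m u hm hu hu2 a = muA hd m u hm hu hu2 b) : a = b := by
  by_cases hbb : Bidx hd m u hm hu2 b = Bidx hd m u hm hu2 a
  · exact (Bidx_inj b a hbb).symm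
  · exfalso
    have h1 : Aidx m u hu hu2 a ≠ Bidx hd m u hm hu2 a :=
      fun he => Bidx_ne_Aidx a a he.symm
    have h2 : Aidx m u hu hu2 b ≠ Bidx hd m u hm hu2 a :=
      fun he => Bidx_ne_Aidx a b he.symm
    have h3 := DFunLike.congr_fun h (Bidx hd m u hm hu2 a)
    simp only [muA, Finsupp.add_apply, Finsupp.single_apply, if_pos rfl, if_neg h1,
      if_neg h2, if_neg hbb] at h3
    norm_num at h3

variable (𝕜) in
lemma Fmu_support_card (hd : 1 ≤ d) (m u : Finset (Fin n)) (hm : m.card = d) (hu : u.card = d)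
    (hu2 : 2 ≤ (u \ m).card) :
    (Fmu 𝕜 d m u).support.card = (m \ u).card + 1 := by
  classical
  obtain ⟨s0, c, hs0, hc, hF⟩ := Fmu_decomp 𝕜 hd m u hm hu hu2
  have hsupp : (Fmu 𝕜 d m u).support =
      insert (muL m u hm hu) ((m \ u).attach.image (muA hd m u hm hu hu2)) := by
    apply subset_antisymm
    · rw [hF]
      intro μ hμ
      rcases Finset.mem_union.mp (MvPolynomial.support_add hμ) with h | h
      · rw [support_monomial, if_neg hs0, Finset.mem_singleton] at h
        exact Finset.mem_insert.mpr (Or.inl h)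
      · have h2 := MvPolynomial.support_sum h
        rw [Finset.mem_biUnion] at h2
        obtain ⟨a, ha, h3⟩ := h2
        rw [support_monomial, if_neg (hc a), Finset.mem_singleton] at h3
        exact Finset.mem_insert.mpr (Or.inr (Finset.mem_image.mpr ⟨a, ha, h3.symm⟩))
    · intro μ hμ
      rw [MvPolynomial.mem_support_iff, hF, coeff_add, coeff_sum]
      rcases Finset.mem_insert.mp hμ with h | h
      · subst h
        rw [coeff_monomial, if_pos rfl, Finset.sum_eq_zero fun a _ => by
          rw [coeff_monomial, if_neg (muA_ne_muL a)]]
        simpa using hs0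
      · obtain ⟨a, _, ha2⟩ := Finset.mem_image.mp h
        subst ha2
        rw [coeff_monomial, if_neg fun he => muA_ne_muL a he.symm,
          Finset.sum_eq_single_of_mem a (Finset.mem_attach _ _)
            (fun b _ hba => by rw [coeff_monomial, if_neg fun he => hba (muA_inj b a he)])]
        rw [coeff_monomial, if_pos rfl]
        simpa using hc a
  rw [hsupp, Finset.card_insert_of_notMem, Finset.card_image_of_injOn
    fun a _ b _ h => muA_inj a b h, Finset.card_attach]
  intro hmem
  obtain ⟨a, _, ha2⟩ := Finset.mem_image.mp hmem
  exact muA_ne_muL a ha2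

variable (𝕜) in
lemma rank_Fmu (hd : 1 ≤ d) (m u : Finset (Fin n)) (hm : m.card = d) (hu : u.card = d)
    (hu2 : 2 ≤ (u \ m).card) :
    rank (Fmu 𝕜 d m u) = (u \ m).card - 2 := by
  have hcomm : (m \ u).card = (u \ m).card := by
    have h1 := Finset.card_sdiff_add_card_inter m u
    have h2 := Finset.card_sdiff_add_card_inter u m
    rw [Finset.inter_comm] at h2
    omega
  rw [rank, Fmu_support_card 𝕜 hd m u hm hu hu2, hcomm]
  omega

lemma monomial_pair {σ R : Type*} [CommRing R] (a b : σ) (c : R) :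
    monomial (Finsupp.single a 1 + Finsupp.single b 1) c = C c * (X a * X b) := by
  rw [X, X, monomial_mul, C_mul_monomial]
  ring_nf

variable (𝕜) in
lemma degreeOf_dehom_X (m : Finset (Fin n)) (x : BIdx d m) (w : Idx d n) (hw : w ≠ x.1) :
    degreeOf x (dehom 𝕜 d m (X w)) = 0 := by
  classical
  rw [dehom, aeval_X]
  split_ifs with h
  · rw [← C_1]
    exact degreeOf_C _ _
  · rw [degreeOf_X, if_neg fun he => hw (congrArg Subtype.val he).symm]

variable (𝕜) in
lemma degreeOf_dehom_pair (m : Finset (Fin n)) (x : BIdx d m) (a b : Idx d n) (c : 𝕜)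
    (ha : a ≠ x.1) (hb : b ≠ x.1) :
    degreeOf x (dehom 𝕜 d m (monomial (Finsupp.single a 1 + Finsupp.single b 1) c)) = 0 := by
  rw [monomial_pair, map_mul, map_mul]
  have hC : degreeOf x (dehom 𝕜 d m (C c)) = 0 := by
    rw [dehom, aeval_C, MvPolynomial.algebraMap_eq]
    exact degreeOf_C _ _
  have h1 := degreeOf_mul_le x (dehom 𝕜 d m (C c)) (dehom 𝕜 d m (X a) * dehom 𝕜 d m (X b))
  have h2 := degreeOf_mul_le x (dehom 𝕜 d m (X a)) (dehom 𝕜 d m (X b))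
  rw [hC, degreeOf_dehom_X 𝕜 m x a ha, degreeOf_dehom_X 𝕜 m x b hb] at *
  omega

end Aux

/-- **The leading variable of `F̄_{m,u}` does not appear in relations of lower or equal
rank.**  Let `u, v ∈ Iᵐ_{d,n}` with `v ≠ u` and `rank F_{m,v} ≤ rank F_{m,u}`.  Then the
leading variable `x_u` of the dehomogenized relation `F̄_{m,u}` does not appear in
`F̄_{m,v}`, i.e. the degree of `F̄_{m,v}` in the variable `x_u` is `0`. -/
theorem leading_variable_not_in_lower_rank
    (𝕜 : Type) [Field 𝕜] {d n : ℕ} (hd : 1 ≤ d) (hdn : d < n)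
    (m u v : Finset (Fin n)) (hm : m.card = d)
    (hu : u.card = d) (hu2 : 2 ≤ (u \ m).card) (hum : u ≠ m)
    (hv : v.card = d) (hv2 : 2 ≤ (v \ m).card)
    (hvu : v ≠ u)
    (hrank : rank (Fmu 𝕜 d m v) ≤ rank (Fmu 𝕜 d m u)) :
    MvPolynomial.degreeOf (⟨⟨u, hu⟩, hum⟩ : BIdx d m) (dehom 𝕜 d m (Fmu 𝕜 d m v)) = 0 := by
  set x : BIdx d m := ⟨⟨u, hu⟩, hum⟩ with hxdef
  have hcard : (v \ m).card ≤ (u \ m).card := by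
    rw [rank_Fmu 𝕜 hd m u hm hu hu2, rank_Fmu 𝕜 hd m v hm hv hv2] at hrank
    omega
  obtain ⟨s0, c, hs0, hc, hF⟩ := Fmu_decomp 𝕜 hd m v hm hv hv2
  rw [hF, map_add, map_sum]
  refine Nat.le_zero.mp ((degreeOf_add_le _ _ _).trans (max_le ?_ ?_))
  · rw [muL]
    refine le_of_eq (degreeOf_dehom_pair 𝕜 m x ⟨m, hm⟩ ⟨v, hv⟩ s0 ?_ ?_)
    · exact fun he => hum (congrArg Subtype.val he).symm
    · exact fun he => hvu (congrArg Subtype.val he)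
  · refine (degreeOf_sum_le _ _ _).trans (Finset.sup_le fun a _ => ?_)
    rw [muA]
    refine le_of_eq (degreeOf_dehom_pair 𝕜 m x _ _ (c a) ?_ ?_)
    · -- Aidx ≠ ⟨u, hu⟩ : the rank argument
      intro he
      have hval : insert a.1 (v.erase (uz m v hv2)) = u := congrArg Subtype.val he
      have ham : a.1 ∈ m := (Finset.mem_sdiff.mp a.2).1
      have hsd : u \ m = (v \ m).erase (uz m v hv2) := by
        rw [← hval, Finset.insert_sdiff_of_mem _ ham, Finset.erase_sdiff_comm]
      have hcd : (u \ m).card = (v \ m).card - 1 := by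
        rw [hsd, Finset.card_erase_of_mem (uz_mem m v hv2)]
      omega
    · -- Bidx ≠ ⟨u, hu⟩ : the cardinality argument
      intro he
      have hval : (Bidx hd m v hm hv2 a).1 = u := congrArg Subtype.val he
      have h1 := Finset.card_le_card
        (Bidx_sdiff_subset (hd := hd) (hm := hm) (hu2 := hv2) a)
      rw [hval, Finset.card_singleton] at h1
      omega

end Resolution
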